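/- For positive reals x_1 > x_2 > ... > x_n > 0 and y_1 > y_2 > ... > y_n > 0, the determinant det(2x_i/(π(x_i² + y_j²)))_{i,j=1}^n is strictly positive. -/

import Mathlib

open Real

open Matrix in
lemma cauchy_det_pos : ∀ (n : ℕ) (a b : Fin n → ℝ), StrictAnti a → StrictAnti b →
    (∀ i, 0 < a i) → (∀ j, 0 < b j) →
    0 < Matrix.det (Matrix.of fun i j : Fin n => (a i + b j)⁻¹) := by
  intro n
  induction n with
  | zero => intro a b _ _ _ _; simp [Matrix.det_fin_zero]
  | succ n ih =>
    intro a b ha hb hapos hbpos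
    have hab : ∀ i j, 0 < a i + b j := fun i j => add_pos (hapos i) (hbpos j)
    have hab' : ∀ i j, a i + b j ≠ 0 := fun i j => (hab i j).ne'
    -- row operations: subtract row 0 from the others
    set B : Matrix (Fin (n+1)) (Fin (n+1)) ℝ :=
      Matrix.of (fun i j => if i = 0 then (a 0 + b j)⁻¹
        else (a i + b j)⁻¹ - (a 0 + b j)⁻¹) with hB
    have h1 : Matrix.det (Matrix.of fun i j : Fin (n+1) => (a i + b j)⁻¹)
        = Matrix.det B := by
      apply Matrix.det_eq_of_forall_row_eq_smul_add_const
        (fun i => if i = 0 then 0 else 1) 0 (if_pos rfl)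
      intro i j
      by_cases hi : i = 0 <;> simp [hB, hi]
    -- column operations: subtract a multiple of column 0 from the others
    set P : Matrix (Fin (n+1)) (Fin (n+1)) ℝ :=
      Matrix.of (fun i j => B i j -
        (if j = 0 then 0 else (a 0 + b 0)/(a 0 + b j)) * B i 0) with hP
    have h2 : Matrix.det B = Matrix.det P := by
      rw [← Matrix.det_transpose B, ← Matrix.det_transpose P]
      apply Matrix.det_eq_of_forall_row_eq_smul_add_const
        (fun j => if j = 0 then 0 else (a 0 + b 0)/(a 0 + b j)) 0 (if_pos rfl)
      intro j i
      by_cases hj : j = 0 <;>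
        simp only [Matrix.transpose_apply, hP, Matrix.of_apply, hj, if_pos, if_neg,
          ite_true, ite_false, if_true, if_false, zero_mul, sub_zero] <;> ring
    -- entries of P
    have hP00 : P 0 0 = (a 0 + b 0)⁻¹ := by simp [hP, hB]
    have hP0j : ∀ j : Fin (n+1), j ≠ 0 → P 0 j = 0 := by
      intro j hj
      have e1 := hab' 0 j
      have e2 := hab' 0 0
      simp only [hP, hB, Matrix.of_apply, if_pos rfl, if_neg hj, ite_true, ite_false]
      rw [sub_eq_zero]
      field_simp
    have hPss : ∀ (i j : Fin n), P i.succ j.succ =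
        ((a 0 - a i.succ) / (a i.succ + b 0)) *
          (((b 0 - b j.succ) / (a 0 + b j.succ)) * (a i.succ + b j.succ)⁻¹) := by
      intro i j
      have hi0 : (i.succ : Fin (n+1)) ≠ 0 := Fin.succ_ne_zero i
      have hj0 : (j.succ : Fin (n+1)) ≠ 0 := Fin.succ_ne_zero j
      have e1 := hab' i.succ j.succ
      have e2 := hab' 0 j.succ
      have e3 := hab' i.succ 0
      have e4 := hab' 0 0
      simp only [hP, hB, Matrix.of_apply, if_neg hi0, if_neg hj0, ite_true, ite_false]
      field_simp
      ring
    -- expand det P along the first row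
    have h3 : Matrix.det P = P 0 0 * Matrix.det (P.submatrix Fin.succ Fin.succ) := by
      rw [Matrix.det_succ_row_zero]
      rw [Finset.sum_eq_single (0 : Fin (n+1))]
      · simp [Fin.succAbove_zero]
      · intro j _ hj
        simp [hP0j j hj]
      · simp
    -- the minor is a scaled Cauchy matrix
    have h4 : P.submatrix Fin.succ Fin.succ =
        Matrix.of (fun i j : Fin n => ((a 0 - a i.succ) / (a i.succ + b 0)) *
          (Matrix.of (fun i j : Fin n => ((b 0 - b j.succ) / (a 0 + b j.succ)) *
            (Matrix.of (fun i j : Fin n => (a (i.succ) + b (j.succ))⁻¹)) i j) i j)) := by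
      ext i j
      simpa using hPss i j
    have ha' : StrictAnti (fun i : Fin n => a i.succ) :=
      ha.comp_strictMono Fin.strictMono_succ
    have hb' : StrictAnti (fun j : Fin n => b j.succ) :=
      hb.comp_strictMono Fin.strictMono_succ
    have hdetN : 0 < Matrix.det (Matrix.of fun i j : Fin n => (a i.succ + b j.succ)⁻¹) :=
      ih _ _ ha' hb' (fun i => hapos _) (fun j => hbpos _)
    rw [h1, h2, h3, h4, Matrix.det_mul_column, Matrix.det_mul_row, hP00]
    have h5 : 0 < ∏ i : Fin n, (a 0 - a i.succ) / (a i.succ + b 0) := by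
      apply Finset.prod_pos
      intro i _
      exact div_pos (sub_pos.mpr (ha (Fin.succ_pos i))) (hab _ _)
    have h6 : 0 < ∏ j : Fin n, (b 0 - b j.succ) / (a 0 + b j.succ) := by
      apply Finset.prod_pos
      intro j _
      exact div_pos (sub_pos.mpr (hb (Fin.succ_pos j))) (hab _ _)
    exact mul_pos (inv_pos.mpr (hab 0 0)) (mul_pos h5 (mul_pos h6 hdetN))

/-- For x_1 > ... > x_n > 0 and y_1 > ... > y_n > 0 the Cauchy-type
determinant det(2x_i/(π(x_i²+y_j²))) is strictly positive. -/
theorem stmt_3 (n : ℕ) (x y : Fin n → ℝ)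
    (hx : StrictAnti x) (hxpos : ∀ i, 0 < x i)
    (hy : StrictAnti y) (hypos : ∀ j, 0 < y j) :
    0 < Matrix.det (Matrix.of fun i j : Fin n =>
        2 * x i / (Real.pi * ((x i) ^ 2 + (y j) ^ 2))) := by
  have hpi := Real.pi_pos
  have key : (Matrix.of fun i j : Fin n =>
      2 * x i / (Real.pi * ((x i) ^ 2 + (y j) ^ 2))) =
      Matrix.of (fun i j : Fin n => (2 * x i / Real.pi) *
        (Matrix.of (fun i j : Fin n => ((x i)^2 + (y j)^2)⁻¹) i j)) := by
    ext i j
    have h1 : 0 < (x i)^2 + (y j)^2 := add_pos (pow_pos (hxpos i) 2) (pow_pos (hypos j) 2)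
    simp only [Matrix.of_apply]
    field_simp
  rw [key, Matrix.det_mul_column]
  have h2 : 0 < Matrix.det (Matrix.of fun i j : Fin n => ((x i)^2 + (y j)^2)⁻¹) := by
    apply cauchy_det_pos n (fun i => (x i)^2) (fun j => (y j)^2)
    · intro i j hij
      exact pow_lt_pow_left₀ (hx hij) (hxpos j).le two_ne_zero
    · intro i j hij
      exact pow_lt_pow_left₀ (hy hij) (hypos j).le two_ne_zero
    · intro i; exact pow_pos (hxpos i) 2
    · intro j; exact pow_pos (hypos j) 2
  have h3 : 0 < ∏ i : Fin n, 2 * x i / Real.pi := by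
    apply Finset.prod_pos; intro i _
    exact div_pos (by linarith [hxpos i]) hpi
  exact mul_pos h3 h2
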